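/- If a formula φ is provable from a set of sentences Γ in classical first-order logic, then φ^N is provable from Γ^N = {γ^N : γ ∈ Γ} in minimal logic. -/

import Mathlib

/-- First-order formulas (de Bruijn indices for variables; atoms are
predicate symbols applied to lists of variables). `¬φ` abbreviates `φ → ⊥`. -/
inductive Fm : Type where
  | atom : ℕ → List ℕ → Fm
  | falsum : Fm
  | and : Fm → Fm → Fm
  | or : Fm → Fm → Fm
  | imp : Fm → Fm → Fm
  | all : Fm → Fm
  | ex : Fm → Fm
  deriving DecidableEq

namespace Fm

/-- negation: ¬φ := φ → ⊥ -/
def neg (p : Fm) : Fm := imp p falsum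

/-- biconditional, as a conjunction of two implications -/
def iff (p q : Fm) : Fm := and (imp p q) (imp q p)

/-- rename free de Bruijn variables -/
def rename (f : ℕ → ℕ) : Fm → Fm
  | atom i a => atom i (a.map f)
  | falsum => falsum
  | and p q => and (rename f p) (rename f q)
  | or p q => or (rename f p) (rename f q)
  | imp p q => imp (rename f p) (rename f q)
  | all p => all (rename (fun n => match n with | 0 => 0 | m+1 => f m + 1) p)
  | ex p => ex (rename (fun n => match n with | 0 => 0 | m+1 => f m + 1) p)

/-- shift all free variables up by one -/
def lift (p : Fm) : Fm := rename Nat.succ p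

/-- substitute the variable `k` for de Bruijn index 0 -/
def inst (k : ℕ) (p : Fm) : Fm := rename (fun n => match n with | 0 => k | m+1 => m) p

end Fm

inductive Logic : Type where
  | minimal | intuitionistic | classical
  deriving DecidableEq

/-- Natural deduction for minimal / intuitionistic / classical first-order logic:
minimal logic has no ex falso rule; intuitionistic logic adds ex falso;
classical logic further adds excluded middle. -/
inductive Pf : Logic → Set Fm → Fm → Prop where
  | ax {L Γ p} : p ∈ Γ → Pf L Γ p
  | andI {L Γ p q} : Pf L Γ p → Pf L Γ q → Pf L Γ (.and p q)
  | andE1 {L Γ p q} : Pf L Γ (.and p q) → Pf L Γ p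
  | andE2 {L Γ p q} : Pf L Γ (.and p q) → Pf L Γ q
  | orI1 {L Γ p q} : Pf L Γ p → Pf L Γ (.or p q)
  | orI2 {L Γ p q} : Pf L Γ q → Pf L Γ (.or p q)
  | orE {L Γ p q r} : Pf L Γ (.or p q) → Pf L (insert p Γ) r → Pf L (insert q Γ) r →
      Pf L Γ r
  | impI {L Γ p q} : Pf L (insert p Γ) q → Pf L Γ (.imp p q)
  | impE {L Γ p q} : Pf L Γ (.imp p q) → Pf L Γ p → Pf L Γ q
  | allI {L Γ p} : Pf L (Fm.lift '' Γ) p → Pf L Γ (.all p)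
  | allE {L Γ p} (k : ℕ) : Pf L Γ (.all p) → Pf L Γ (p.inst k)
  | exI {L Γ p} (k : ℕ) : Pf L Γ (p.inst k) → Pf L Γ (.ex p)
  | exE {L Γ p r} : Pf L Γ (.ex p) → Pf L (insert p (Fm.lift '' Γ)) r.lift → Pf L Γ r
  | exfalso {L Γ p} : L ≠ .minimal → Pf L Γ .falsum → Pf L Γ p
  | em {Γ p} : Pf .classical Γ (.or p (.neg p))

/-- The Gödel–Gentzen negative translation. -/
def N : Fm → Fm
  | .atom i a => .neg (.neg (.atom i a))
  | .falsum => .falsum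
  | .and p q => .and (N p) (N q)
  | .or p q => .neg (.and (.neg (N p)) (.neg (N q)))
  | .imp p q => .imp (N p) (N q)
  | .all p => .all (N p)
  | .ex p => .neg (.all (.neg (N p)))

section Aux

open Fm Pf

/-! ### Rename lemmas -/

private lemma rename_congr (f g : ℕ → ℕ) (h : ∀ n, f n = g n) (p : Fm) :
    Fm.rename f p = Fm.rename g p := by
  induction p generalizing f g with
  | atom i a => simp [Fm.rename]; exact fun x _ => h x
  | falsum => rfl
  | and p q ihp ihq => simp [Fm.rename, ihp _ _ h, ihq _ _ h]
  | or p q ihp ihq => simp [Fm.rename, ihp _ _ h, ihq _ _ h]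
  | imp p q ihp ihq => simp [Fm.rename, ihp _ _ h, ihq _ _ h]
  | all p ih =>
      simp [Fm.rename]; apply ih; intro n; cases n <;> simp [h]
  | ex p ih =>
      simp [Fm.rename]; apply ih; intro n; cases n <;> simp [h]

private lemma rename_comp (f g : ℕ → ℕ) (p : Fm) :
    Fm.rename g (Fm.rename f p) = Fm.rename (g ∘ f) p := by
  induction p generalizing f g with
  | atom i a => simp [Fm.rename]
  | falsum => rfl
  | and p q ihp ihq => simp [Fm.rename, ihp, ihq]
  | or p q ihp ihq => simp [Fm.rename, ihp, ihq]
  | imp p q ihp ihq => simp [Fm.rename, ihp, ihq]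
  | all p ih =>
      simp [Fm.rename, ih]
      apply rename_congr; intro n; cases n <;> simp
  | ex p ih =>
      simp [Fm.rename, ih]
      apply rename_congr; intro n; cases n <;> simp

private lemma rename_id (p : Fm) : Fm.rename (fun n => n) p = p := by
  induction p with
  | atom i a => simp [Fm.rename]
  | falsum => rfl
  | and p q ihp ihq => simp [Fm.rename, ihp, ihq]
  | or p q ihp ihq => simp [Fm.rename, ihp, ihq]
  | imp p q ihp ihq => simp [Fm.rename, ihp, ihq]
  | all p ih => simp [Fm.rename]; rw [rename_congr _ (fun n => n) _ _, ih]
                intro n; cases n <;> rfl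
  | ex p ih => simp [Fm.rename]; rw [rename_congr _ (fun n => n) _ _, ih]
               intro n; cases n <;> rfl

private lemma inst_zero_liftbody (q : Fm) :
    Fm.inst 0 (Fm.rename (fun n => match n with | 0 => 0 | m+1 => Nat.succ m + 1) q) = q := by
  unfold Fm.inst
  rw [rename_comp]
  rw [rename_congr _ (fun n => n) _ _, rename_id]
  intro n; cases n <;> rfl

private lemma lift_all (q : Fm) :
    Fm.lift (Fm.all q) =
      Fm.all (Fm.rename (fun n => match n with | 0 => 0 | m+1 => Nat.succ m + 1) q) := rfl

private lemma rename_neg (f : ℕ → ℕ) (p : Fm) :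
    Fm.rename f (Fm.neg p) = Fm.neg (Fm.rename f p) := rfl

private lemma lift_neg (p : Fm) : Fm.lift (Fm.neg p) = Fm.neg (Fm.lift p) := rfl

private lemma all_lift_elim {L : Logic} {Γ : Set Fm} {q : Fm}
    (h : Pf L Γ (Fm.lift (Fm.all q))) : Pf L Γ q := by
  rw [lift_all] at h
  have h2 := Pf.allE 0 h
  rwa [inst_zero_liftbody] at h2

private lemma N_rename (f : ℕ → ℕ) (p : Fm) : N (Fm.rename f p) = Fm.rename f (N p) := by
  induction p generalizing f with
  | atom i a => rfl
  | falsum => rfl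
  | and p q ihp ihq => simp [N, Fm.rename, ihp, ihq]
  | or p q ihp ihq => simp [N, Fm.rename, Fm.neg, ihp, ihq]
  | imp p q ihp ihq => simp [N, Fm.rename, ihp, ihq]
  | all p ih => simp [N, Fm.rename, ih]
  | ex p ih => simp [N, Fm.rename, Fm.neg, ih]

private lemma N_lift (p : Fm) : N (Fm.lift p) = Fm.lift (N p) := N_rename _ _

private lemma N_inst (k : ℕ) (p : Fm) : N (Fm.inst k p) = Fm.inst k (N p) := N_rename _ _

private lemma inst_neg (k : ℕ) (p : Fm) :
    Fm.inst k (Fm.neg p) = Fm.neg (Fm.inst k p) := rfl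

private lemma N_image_lift (Γ : Set Fm) : N '' (Fm.lift '' Γ) = Fm.lift '' (N '' Γ) := by
  rw [Set.image_image, Set.image_image]
  have hf : (fun x => N (Fm.lift x)) = (fun x => Fm.lift (N x)) := funext (fun x => N_rename _ _)
  rw [hf]

/-! ### Weakening -/

private lemma Pf.weaken {L : Logic} {Γ Δ : Set Fm} {p : Fm}
    (h : Pf L Γ p) (s : Γ ⊆ Δ) : Pf L Δ p := by
  induction h generalizing Δ with
  | ax hm => exact Pf.ax (s hm)
  | andI _ _ ih1 ih2 => exact Pf.andI (ih1 s) (ih2 s)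
  | andE1 _ ih => exact Pf.andE1 (ih s)
  | andE2 _ ih => exact Pf.andE2 (ih s)
  | orI1 _ ih => exact Pf.orI1 (ih s)
  | orI2 _ ih => exact Pf.orI2 (ih s)
  | orE _ _ _ ih ih1 ih2 =>
      exact Pf.orE (ih s) (ih1 (Set.insert_subset_insert s)) (ih2 (Set.insert_subset_insert s))
  | impI _ ih => exact Pf.impI (ih (Set.insert_subset_insert s))
  | impE _ _ ih1 ih2 => exact Pf.impE (ih1 s) (ih2 s)
  | allI _ ih => exact Pf.allI (ih (Set.image_mono s))
  | allE k _ ih => exact Pf.allE k (ih s)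
  | exI k _ ih => exact Pf.exI k (ih s)
  | exE _ _ ih1 ih2 =>
      exact Pf.exE (ih1 s) (ih2 (Set.insert_subset_insert (Set.image_mono s)))
  | exfalso hL _ ih => exact Pf.exfalso hL (ih s)
  | em => exact Pf.em

/-! ### Minimal logic facts -/

private lemma neg_stab {L : Logic} {Γ : Set Fm} (q : Fm) :
    Pf L Γ (.imp (Fm.neg (Fm.neg (Fm.neg q))) (Fm.neg q)) := by
  apply Pf.impI
  apply Pf.impI
  refine Pf.impE (Pf.ax (Set.mem_insert_of_mem _ (Set.mem_insert _ _))) ?_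
  apply Pf.impI
  exact Pf.impE (Pf.ax (Set.mem_insert _ _))
    (Pf.ax (Set.mem_insert_of_mem _ (Set.mem_insert _ _)))

private lemma stab (φ : Fm) : ∀ (L : Logic) (Γ : Set Fm),
    Pf L Γ (.imp (Fm.neg (Fm.neg (N φ))) (N φ)) := by
  induction φ with
  | atom i a => intro L Γ; exact neg_stab _
  | falsum =>
      intro L Γ
      apply Pf.impI
      exact Pf.impE (Pf.ax (Set.mem_insert _ _)) (Pf.impI (Pf.ax (Set.mem_insert _ _)))
  | and A B ihA ihB =>
      intro L Γ
      apply Pf.impI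
      apply Pf.andI
      · refine Pf.impE (ihA _ _) ?_
        apply Pf.impI
        refine Pf.impE (Pf.ax (Set.mem_insert_of_mem _ (Set.mem_insert _ _))) ?_
        apply Pf.impI
        exact Pf.impE (Pf.ax (Set.mem_insert_of_mem _ (Set.mem_insert _ _)))
          (Pf.andE1 (Pf.ax (Set.mem_insert _ _)))
      · refine Pf.impE (ihB _ _) ?_
        apply Pf.impI
        refine Pf.impE (Pf.ax (Set.mem_insert_of_mem _ (Set.mem_insert _ _))) ?_
        apply Pf.impI
        exact Pf.impE (Pf.ax (Set.mem_insert_of_mem _ (Set.mem_insert _ _)))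
          (Pf.andE2 (Pf.ax (Set.mem_insert _ _)))
  | or A B ihA ihB => intro L Γ; exact neg_stab _
  | imp A B ihA ihB =>
      intro L Γ
      apply Pf.impI
      apply Pf.impI
      refine Pf.impE (ihB _ _) ?_
      apply Pf.impI
      refine Pf.impE (Pf.ax (Set.mem_insert_of_mem _
        (Set.mem_insert_of_mem _ (Set.mem_insert _ _)))) ?_
      apply Pf.impI
      refine Pf.impE (Pf.ax (Set.mem_insert_of_mem _ (Set.mem_insert _ _))) ?_
      exact Pf.impE (Pf.ax (Set.mem_insert _ _))
        (Pf.ax (Set.mem_insert_of_mem _ (Set.mem_insert_of_mem _ (Set.mem_insert _ _))))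
  | all A ihA =>
      intro L Γ
      apply Pf.impI
      apply Pf.allI
      rw [Set.image_insert_eq]
      refine Pf.impE (ihA _ _) ?_
      apply Pf.impI
      have hax : Pf L (insert (Fm.neg (N A))
          (insert (Fm.lift (Fm.neg (Fm.neg (Fm.all (N A))))) (Fm.lift '' Γ)))
          (Fm.lift (Fm.neg (Fm.neg (Fm.all (N A))))) :=
        Pf.ax (Set.mem_insert_of_mem _ (Set.mem_insert _ _))
      rw [lift_neg, lift_neg] at hax
      refine Pf.impE hax ?_
      apply Pf.impI
      exact Pf.impE (Pf.ax (Set.mem_insert_of_mem _ (Set.mem_insert _ _)))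
        (all_lift_elim (Pf.ax (Set.mem_insert _ _)))
  | ex A ihA => intro L Γ; exact neg_stab _

private lemma bot_elim {L : Logic} {Γ : Set Fm} {φ : Fm}
    (h : Pf L Γ .falsum) : Pf L Γ (N φ) := by
  refine Pf.impE (stab φ _ _) ?_
  exact Pf.impI (Pf.weaken h (Set.subset_insert _ _))

private lemma gg_main {L : Logic} {Γ : Set Fm} {φ : Fm}
    (h : Pf L Γ φ) : Pf .minimal (N '' Γ) (N φ) := by
  induction h with
  | ax hm => exact Pf.ax ⟨_, hm, rfl⟩
  | andI _ _ ih1 ih2 => exact Pf.andI ih1 ih2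
  | andE1 _ ih => exact Pf.andE1 ih
  | andE2 _ ih => exact Pf.andE2 ih
  | orI1 _ ih =>
      apply Pf.impI
      exact Pf.impE (Pf.andE1 (Pf.ax (Set.mem_insert _ _)))
        (Pf.weaken ih (Set.subset_insert _ _))
  | orI2 _ ih =>
      apply Pf.impI
      exact Pf.impE (Pf.andE2 (Pf.ax (Set.mem_insert _ _)))
        (Pf.weaken ih (Set.subset_insert _ _))
  | orE _ _ _ ih ih1 ih2 =>
      rename_i p q r _ _ _
      rw [Set.image_insert_eq] at ih1 ih2
      refine Pf.impE (stab r _ _) ?_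
      apply Pf.impI
      refine Pf.impE (Pf.weaken ih (Set.subset_insert _ _)) ?_
      apply Pf.andI
      · apply Pf.impI
        refine Pf.impE (Pf.ax (Set.mem_insert_of_mem _ (Set.mem_insert _ _))) ?_
        exact Pf.weaken ih1 (Set.insert_subset_insert (Set.subset_insert _ _))
      · apply Pf.impI
        refine Pf.impE (Pf.ax (Set.mem_insert_of_mem _ (Set.mem_insert _ _))) ?_
        exact Pf.weaken ih2 (Set.insert_subset_insert (Set.subset_insert _ _))
  | impI _ ih =>
      rw [Set.image_insert_eq] at ih
      exact Pf.impI ih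
  | impE _ _ ih1 ih2 => exact Pf.impE ih1 ih2
  | allI _ ih =>
      apply Pf.allI
      rwa [N_image_lift] at ih
  | allE k hall ih =>
      have := Pf.allE k ih
      rwa [← N_inst] at this
  | exI k hk ih =>
      rename_i L' Γ' p
      apply Pf.impI
      have h0 : Pf Logic.minimal (insert (Fm.all (Fm.neg (N p))) (N '' Γ'))
          ((Fm.neg (N p)).inst k) := Pf.allE k (Pf.ax (Set.mem_insert _ _))
      rw [inst_neg, ← N_inst] at h0
      exact Pf.impE h0 (Pf.weaken ih (Set.subset_insert _ _))
  | exE _ _ ih1 ih2 =>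
      rename_i p r _ _
      rw [Set.image_insert_eq, N_lift, N_image_lift] at ih2
      refine Pf.impE (stab r _ _) ?_
      apply Pf.impI
      refine Pf.impE (Pf.weaken ih1 (Set.subset_insert _ _)) ?_
      apply Pf.allI
      rw [Set.image_insert_eq, lift_neg]
      apply Pf.impI
      refine Pf.impE (Pf.ax (Set.mem_insert_of_mem _ (Set.mem_insert _ _))) ?_
      exact Pf.weaken ih2 (Set.insert_subset_insert (Set.subset_insert _ _))
  | exfalso _ _ ih => exact bot_elim ih
  | em =>
      apply Pf.impI
      exact Pf.impE (Pf.andE2 (Pf.ax (Set.mem_insert _ _)))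
        (Pf.andE1 (Pf.ax (Set.mem_insert _ _)))

end Aux

/-- if φ is provable from Γ in classical logic, then φ^N is
provable from Γ^N = {γ^N : γ ∈ Γ} in minimal logic. -/
theorem godel_gentzen_sound {Γ : Set Fm} {φ : Fm}
    (h : Pf .classical Γ φ) : Pf .minimal (N '' Γ) (N φ) := gg_main h
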